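/- arXiv:1808.03116 — 4 statements merged into one kernel-verified Lean document; each statement's English description precedes it below -/
import Mathlib

section
/- Let (E, ρ, [·,·]) be an A-module with anchor and an almost Lie bracket, and let ∇ be an E-connection on E with torsion T and curvature R. Then for all X, Y, Z ∈ E the first Bianchi identity holds: Σ_cyc R(X,Y)Z = Σ_cyc (∇_X T)(Y,Z) + Σ_cyc T(T(X,Y),Z) + J(X,Y,Z), where (∇_X T)(Y,Z) := ∇_X(T(Y,Z)) − T(∇_X Y, Z) − T(Y, ∇_X Z), Σ_cyc denotes the sum over the three cyclic permutations of (X,Y,Z), and J is the Jacobiator of the bracket. -/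
noncomputable section

set_option maxHeartbeats 1000000
set_option synthInstance.maxHeartbeats 400000

/-- first Bianchi identity.  Let `A` be a commutative ℝ-algebra, `E` an
`A`-module with an anchor `ρ : E → Der_ℝ(A)` and an almost Lie bracket `br` (ℝ-bilinear,
skew-symmetric, satisfying the Leibniz rule), and let `D` be an `E`-connection on `E` with
torsion `T` and curvature `R`.  Then
`Σ_cyc R(X,Y)Z = Σ_cyc (∇_X T)(Y,Z) + Σ_cyc T(T(X,Y),Z) + J(X,Y,Z)`. -/
theorem statement0
    {A : Type*} [CommRing A] [Algebra ℝ A]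
    {E : Type*} [AddCommGroup E] [Module A E] [Module ℝ E] [IsScalarTower ℝ A E]
    (ρ : E →ₗ[A] Derivation ℝ A A) (br : E → E → E)
    (br_addl : ∀ X X' Y : E, br (X + X') Y = br X Y + br X' Y)
    (br_addr : ∀ X Y Y' : E, br X (Y + Y') = br X Y + br X Y')
    (br_smull : ∀ (c : ℝ) (X Y : E), br (c • X) Y = c • br X Y)
    (br_smulr : ∀ (c : ℝ) (X Y : E), br X (c • Y) = c • br X Y)
    (br_skew : ∀ X Y : E, br Y X = - br X Y)
    (br_leib : ∀ (f : A) (X Y : E), br X (f • Y) = ρ X f • Y + f • br X Y)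
    (D : E → E → E)
    (D_addl : ∀ X X' Y : E, D (X + X') Y = D X Y + D X' Y)
    (D_smull : ∀ (f : A) (X Y : E), D (f • X) Y = f • D X Y)
    (D_addr : ∀ X Y Y' : E, D X (Y + Y') = D X Y + D X Y')
    (D_leib : ∀ (f : A) (X Y : E), D X (f • Y) = ρ X f • Y + f • D X Y)
    (T : E → E → E) (hT : ∀ X Y : E, T X Y = D X Y - D Y X - br X Y)
    (R : E → E → E → E)
    (hR : ∀ X Y Z : E, R X Y Z = D X (D Y Z) - D Y (D X Z) - D (br X Y) Z)
    (X Y Z : E) :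
    R X Y Z + R Y Z X + R Z X Y =
      ((D X (T Y Z) - T (D X Y) Z - T Y (D X Z))
        + (D Y (T Z X) - T (D Y Z) X - T Z (D Y X))
        + (D Z (T X Y) - T (D Z X) Y - T X (D Z Y)))
      + (T (T X Y) Z + T (T Y Z) X + T (T Z X) Y)
      + (br X (br Y Z) + br Y (br Z X) + br Z (br X Y)) := by
  have brl_neg : ∀ X Y : E, br (-X) Y = - br X Y := by
    intro X Y
    have := br_smull (-1) X Y
    simpa using this
  have brr_neg : ∀ X Y : E, br X (-Y) = - br X Y := by
    intro X Y
    have := br_smulr (-1) X Y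
    simpa using this
  have brl_sub : ∀ X X' Y : E, br (X - X') Y = br X Y - br X' Y := by
    intro X X' Y
    rw [sub_eq_add_neg, br_addl, brl_neg, sub_eq_add_neg]
  have brr_sub : ∀ X Y Y' : E, br X (Y - Y') = br X Y - br X Y' := by
    intro X Y Y'
    rw [sub_eq_add_neg, br_addr, brr_neg, sub_eq_add_neg]
  have Dl_neg : ∀ X Y : E, D (-X) Y = - D X Y := by
    intro X Y
    have := D_smull (-1) X Y
    simpa using this
  have Dr_neg : ∀ X Y : E, D X (-Y) = - D X Y := by
    intro X Y
    have := D_leib (-1) X Y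
    simpa using this
  have Dl_sub : ∀ X X' Y : E, D (X - X') Y = D X Y - D X' Y := by
    intro X X' Y
    rw [sub_eq_add_neg, D_addl, Dl_neg, sub_eq_add_neg]
  have Dr_sub : ∀ X Y Y' : E, D X (Y - Y') = D X Y - D X Y' := by
    intro X Y Y'
    rw [sub_eq_add_neg, D_addr, Dr_neg, sub_eq_add_neg]
  simp only [hR, hT, Dl_sub, Dr_sub, brl_sub, brr_sub]
  rw [br_skew (D X Z) Y, br_skew (D Y X) Z, br_skew (D Z Y) X,
    br_skew (br Y Z) X, br_skew (br Z X) Y, br_skew (br X Y) Z]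
  abel
end
end

section
/- The bracket [·,·]_{E₀} on sections of E₀ is anchor-compatible: for all sections X, Y of E₀ one has ρ([X,Y]_{E₀}) = [ρ(X), ρ(Y)], where the right-hand side is the Lie bracket of vector fields on ℝ². In other words, (E₀, ρ, [·,·]_{E₀}) is an almost Lie algebroid. -/
noncomputable section

set_option maxHeartbeats 1000000
set_option synthInstance.maxHeartbeats 400000

open Matrix

/-- The ℝ-algebra of smooth (C^∞) functions on ℝ². -/
def Sm : Subalgebra ℝ ((ℝ × ℝ) → ℝ) where
  carrier := {f | ContDiff ℝ (⊤ : ℕ∞) f}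
  mul_mem' := fun {a b} (hf : ContDiff ℝ (⊤ : ℕ∞) a) (hg : ContDiff ℝ (⊤ : ℕ∞) b) => hf.mul hg
  add_mem' := fun {a b} (hf : ContDiff ℝ (⊤ : ℕ∞) a) (hg : ContDiff ℝ (⊤ : ℕ∞) b) => hf.add hg
  algebraMap_mem' r :=
    show ContDiff ℝ (⊤ : ℕ∞) (algebraMap ℝ ((ℝ × ℝ) → ℝ) r) from contDiff_const

/-- Smooth functions on the plane. -/
abbrev S : Type := Sm

lemma mem_Sm_iff {f : (ℝ × ℝ) → ℝ} : f ∈ Sm ↔ ContDiff ℝ (⊤ : ℕ∞) f := by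
  rw [Sm]; rfl

lemma smooth_coe (f : S) : ContDiff ℝ (⊤ : ℕ∞) (f : (ℝ × ℝ) → ℝ) := mem_Sm_iff.mp f.2

/-- Sections of the trivial bundle `ℝ² × M₂(ℝ)`, as 2×2 matrices of smooth functions. -/
abbrev E₀ : Type := Matrix (Fin 2) (Fin 2) S

/-- The section `X_j^i`: the constant elementary matrix with 1 in entry (i,j). -/
def sb (i j : Fin 2) : E₀ := Matrix.single i j 1

/-- First coordinate function. -/
def x₁ : S := ⟨fun p => p.1, mem_Sm_iff.mpr contDiff_fst⟩
/-- Second coordinate function. -/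
def x₂ : S := ⟨fun p => p.2, mem_Sm_iff.mpr contDiff_snd⟩
/-- Coordinates. -/
def xc : Fin 2 → S := ![x₁, x₂]

/-- Directional derivative of a smooth function, in direction `v`. -/
def pdAux (v : ℝ × ℝ) (f : S) : S :=
  ⟨fun p => fderiv ℝ (f : (ℝ × ℝ) → ℝ) p v,
    mem_Sm_iff.mpr (((smooth_coe f).fderiv_right (le_refl _)).clm_apply contDiff_const)⟩

/-- The vector field (derivation) `∂/∂v` on `ℝ²`. -/
def pd (v : ℝ × ℝ) : Derivation ℝ S S where
  toFun := pdAux v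
  map_add' f g := by
    ext p
    have hf : DifferentiableAt ℝ (f : (ℝ × ℝ) → ℝ) p :=
      ((smooth_coe f).differentiable (by simp)).differentiableAt
    have hg : DifferentiableAt ℝ (g : (ℝ × ℝ) → ℝ) p :=
      ((smooth_coe g).differentiable (by simp)).differentiableAt
    have h1 : ((f + g : S) : (ℝ × ℝ) → ℝ) = fun q => (f : (ℝ × ℝ) → ℝ) q + (g : (ℝ × ℝ) → ℝ) q := rfl
    simp only [pdAux, h1, AddMemClass.coe_add, Pi.add_apply]
    rw [show (fun q => (f : (ℝ × ℝ) → ℝ) q + (g : (ℝ × ℝ) → ℝ) q) = (f : (ℝ × ℝ) → ℝ) + g from rfl,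
      fderiv_add hf hg]
    simp
  map_smul' c f := by
    ext p
    have h1 : ((c • f : S) : (ℝ × ℝ) → ℝ) = fun q => c * (f : (ℝ × ℝ) → ℝ) q := rfl
    have hf : DifferentiableAt ℝ (f : (ℝ × ℝ) → ℝ) p :=
      ((smooth_coe f).differentiable (by simp)).differentiableAt
    simp only [pdAux]
    rw [h1, fderiv_const_mul hf]
    simp
  map_one_eq_zero' := by
    ext p
    have h1 : ((1 : S) : (ℝ × ℝ) → ℝ) = fun _ => (1 : ℝ) := rfl
    have h2 : fderiv ℝ (1 : (ℝ × ℝ) → ℝ) p = 0 := fderiv_const_apply 1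
    simp [pdAux, h1, h2]
  leibniz' f g := by
    ext p
    have hf : DifferentiableAt ℝ (f : (ℝ × ℝ) → ℝ) p :=
      ((smooth_coe f).differentiable (by simp)).differentiableAt
    have hg : DifferentiableAt ℝ (g : (ℝ × ℝ) → ℝ) p :=
      ((smooth_coe g).differentiable (by simp)).differentiableAt
    have h1 : ((f * g : S) : (ℝ × ℝ) → ℝ) = fun q => (f : (ℝ × ℝ) → ℝ) q * (g : (ℝ × ℝ) → ℝ) q := rfl
    simp [pdAux, h1, fderiv_mul hf hg]
    rw [show (fun q => (f : (ℝ × ℝ) → ℝ) q * (g : (ℝ × ℝ) → ℝ) q) = (f : (ℝ × ℝ) → ℝ) * g from rfl,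
      fderiv_mul hf hg]
    simp
    try ring

/-- Standard basis vectors of ℝ². -/
def ev : Fin 2 → ℝ × ℝ := ![(1, 0), (0, 1)]

/-- The anchor `ρ` of `E₀`: `ρ(X_j^i) = (x^i)² ∂/∂x^j`, extended `C^∞(ℝ²)`-linearly. -/
def anchor (X : E₀) : Derivation ℝ S S :=
  ∑ i : Fin 2, ∑ j : Fin 2, (X i j * xc i ^ 2) • pd (ev j)

/-- The section `𝒳₁ = (x²)² X₁¹ − (x¹)² X₁²`. -/
def 𝓧₁ : E₀ := x₂ ^ 2 • sb 0 0 - x₁ ^ 2 • sb 1 0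
/-- The section `𝒳₂ = (x²)² X₂¹ − (x¹)² X₂²`. -/
def 𝓧₂ : E₀ := x₂ ^ 2 • sb 0 1 - x₁ ^ 2 • sb 1 1

/-- The almost Lie bracket axioms for `(E₀, ρ)`, together with the defining values
`[X_j^i, X_l^k] = 2x^k δ_j^k X_l^i − 2x^i δ_l^i X_j^k` on the generators: ℝ-bilinearity,
skew-symmetry, the Leibniz rule, and the values on generators. -/
def IsBracket (L : E₀ → E₀ → E₀) : Prop :=
  (∀ X X' Y, L (X + X') Y = L X Y + L X' Y) ∧
  (∀ X Y Y', L X (Y + Y') = L X Y + L X Y') ∧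
  (∀ (c : ℝ) (X Y : E₀), L (c • X) Y = c • L X Y) ∧
  (∀ (c : ℝ) (X Y : E₀), L X (c • Y) = c • L X Y) ∧
  (∀ X Y, L Y X = - L X Y) ∧
  (∀ (f : S) (X Y : E₀), L X (f • Y) = anchor X f • Y + f • L X Y) ∧
  (∀ i j k l, L (sb i j) (sb k l) =
    (if j = k then (2 : S) * xc k else 0) • sb i l
      - (if l = i then (2 : S) * xc i else 0) • sb k j)


section Aux

lemma S_ext {f g : S} (h : ∀ p, (f : (ℝ × ℝ) → ℝ) p = (g : (ℝ × ℝ) → ℝ) p) : f = g :=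
  Subtype.ext (funext h)

lemma pd_apply (v : ℝ × ℝ) (f : S) (p : ℝ × ℝ) :
    ((pd v f : S) : (ℝ × ℝ) → ℝ) p = fderiv ℝ (f : (ℝ × ℝ) → ℝ) p v := rfl

lemma coe_mul' (f g : S) (p : ℝ × ℝ) :
    ((f * g : S) : (ℝ × ℝ) → ℝ) p = (f : (ℝ × ℝ) → ℝ) p * (g : (ℝ × ℝ) → ℝ) p := rfl
lemma coe_smul' (f g : S) (p : ℝ × ℝ) :
    ((f • g : S) : (ℝ × ℝ) → ℝ) p = (f : (ℝ × ℝ) → ℝ) p * (g : (ℝ × ℝ) → ℝ) p := rfl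
lemma coe_pow' (f : S) (n : ℕ) (p : ℝ × ℝ) :
    ((f ^ n : S) : (ℝ × ℝ) → ℝ) p = (f : (ℝ × ℝ) → ℝ) p ^ n := by
  induction n with
  | zero => rfl
  | succ n ih => rw [pow_succ, pow_succ, coe_mul', ih]

lemma anchor_add (X Y : E₀) : anchor (X + Y) = anchor X + anchor Y := by
  simp [anchor, Matrix.add_apply, add_mul, add_smul, Finset.sum_add_distrib]

example (a b : S) (D : Derivation ℝ S S) : (a - b) • D = a • D - b • D := sub_smul a b D

lemma anchor_sub (X Y : E₀) : anchor (X - Y) = anchor X - anchor Y := by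
  simp only [anchor, Matrix.sub_apply, Fin.sum_univ_two]
  module

lemma anchor_smul (f : S) (X : E₀) : anchor (f • X) = f • anchor X := by
  simp [anchor, Matrix.smul_apply, smul_eq_mul, mul_assoc, mul_smul, Finset.smul_sum]

lemma anchor_sb (i j : Fin 2) : anchor (sb i j) = (xc i ^ 2) • pd (ev j) := by
  fin_cases i <;> fin_cases j <;>
    simp [anchor, sb, Fin.sum_univ_two, Matrix.single, Matrix.of_apply]

lemma smul_deriv_apply (f : S) (D : Derivation ℝ S S) (g : S) : (f • D) g = f * D g := rfl

lemma lie_smul_smul (f g : S) (D E : Derivation ℝ S S) :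
    ⁅f • D, g • E⁆ = (f * D g) • E - (g * E f) • D + (f * g) • ⁅D, E⁆ := by
  ext h
  simp only [Derivation.commutator_apply, smul_deriv_apply, Derivation.add_apply,
    Derivation.sub_apply, Derivation.leibniz, smul_eq_mul]
  ring

end Aux

section Aux2

lemma fderiv_sq_fst (p v : ℝ × ℝ) :
    fderiv ℝ (fun q : ℝ × ℝ => q.1 * q.1) p v = 2 * p.1 * v.1 := by
  rw [show (fun q : ℝ × ℝ => q.1 * q.1) = (Prod.fst * Prod.fst) from rfl,
    (hasFDerivAt_fst.mul hasFDerivAt_fst).fderiv]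
  simp
  ring

lemma fderiv_sq_snd (p v : ℝ × ℝ) :
    fderiv ℝ (fun q : ℝ × ℝ => q.2 * q.2) p v = 2 * p.2 * v.2 := by
  rw [show (fun q : ℝ × ℝ => q.2 * q.2) = (Prod.snd * Prod.snd) from rfl,
    (hasFDerivAt_snd.mul hasFDerivAt_snd).fderiv]
  simp
  ring

lemma coe_xc0_sq : ((xc 0 ^ 2 : S) : (ℝ × ℝ) → ℝ) = fun q => q.1 * q.1 :=
  funext fun q => by rw [coe_pow']; show q.1 ^ 2 = _; ring

lemma coe_xc1_sq : ((xc 1 ^ 2 : S) : (ℝ × ℝ) → ℝ) = fun q => q.2 * q.2 :=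
  funext fun q => by rw [coe_pow']; show q.2 ^ 2 = _; ring

lemma coe_two_xc0 (p : ℝ × ℝ) : (((2 : S) * xc 0 : S) : (ℝ × ℝ) → ℝ) p = 2 * p.1 := by
  rw [coe_mul']; rfl

lemma coe_two_xc1 (p : ℝ × ℝ) : (((2 : S) * xc 1 : S) : (ℝ × ℝ) → ℝ) p = 2 * p.2 := by
  rw [coe_mul']; rfl

lemma pd_sq00 : pd (ev 0) (xc 0 ^ 2) = if (0 : Fin 2) = 0 then (2 : S) * xc 0 else 0 := by
  rw [if_pos rfl]; apply S_ext; intro p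
  rw [pd_apply, coe_xc0_sq, fderiv_sq_fst, coe_two_xc0]
  show 2 * p.1 * (1 : ℝ) = _; ring

lemma pd_sq01 : pd (ev 0) (xc 1 ^ 2) = if (0 : Fin 2) = 1 then (2 : S) * xc 1 else 0 := by
  rw [if_neg (by decide)]; apply S_ext; intro p
  rw [pd_apply, coe_xc1_sq, fderiv_sq_snd]
  show 2 * p.2 * (0 : ℝ) = (0 : ℝ); ring

lemma pd_sq10 : pd (ev 1) (xc 0 ^ 2) = if (1 : Fin 2) = 0 then (2 : S) * xc 0 else 0 := by
  rw [if_neg (by decide)]; apply S_ext; intro p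
  rw [pd_apply, coe_xc0_sq, fderiv_sq_fst]
  show 2 * p.1 * (0 : ℝ) = (0 : ℝ); ring

lemma pd_sq11 : pd (ev 1) (xc 1 ^ 2) = if (1 : Fin 2) = 1 then (2 : S) * xc 1 else 0 := by
  rw [if_pos rfl]; apply S_ext; intro p
  rw [pd_apply, coe_xc1_sq, fderiv_sq_snd, coe_two_xc1]
  show 2 * p.2 * (1 : ℝ) = _; ring

lemma pd_sq (j k : Fin 2) :
    pd (ev j) (xc k ^ 2) = if j = k then (2 : S) * xc k else 0 := by
  fin_cases j <;> fin_cases k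
  · exact pd_sq00
  · exact pd_sq01
  · exact pd_sq10
  · exact pd_sq11

lemma pd_comm (u v : ℝ × ℝ) (f : S) : pd u (pd v f) = pd v (pd u f) := by
  apply S_ext; intro p
  have hs := smooth_coe f
  have hd : ∀ y, HasFDerivAt (f : (ℝ × ℝ) → ℝ) (fderiv ℝ (f : (ℝ × ℝ) → ℝ) y) y :=
    fun y => ((hs.differentiable (by simp)).differentiableAt).hasFDerivAt
  have hfd : ContDiff ℝ (⊤ : ℕ∞) (fderiv ℝ (f : (ℝ × ℝ) → ℝ)) := hs.fderiv_right (le_refl _)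
  have hdd : DifferentiableAt ℝ (fderiv ℝ (f : (ℝ × ℝ) → ℝ)) p :=
    (hfd.differentiable (by simp)).differentiableAt
  have h2 := second_derivative_symmetric hd hdd.hasFDerivAt u v
  have h3 : ∀ w : ℝ × ℝ, fderiv ℝ (fun q => fderiv ℝ (f : (ℝ × ℝ) → ℝ) q w) p =
      (ContinuousLinearMap.flip (fderiv ℝ (fderiv ℝ (f : (ℝ × ℝ) → ℝ)) p)) w := by
    intro w
    rw [fderiv_clm_apply hdd (differentiableAt_const w)]
    simp
  show fderiv ℝ (fun q => fderiv ℝ (f : (ℝ × ℝ) → ℝ) q v) p u =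
    fderiv ℝ (fun q => fderiv ℝ (f : (ℝ × ℝ) → ℝ) q u) p v
  rw [h3 v, h3 u]
  simpa using h2

lemma lie_pd_pd (u v : ℝ × ℝ) : ⁅pd u, pd v⁆ = (0 : Derivation ℝ S S) := by
  ext f
  rw [Derivation.commutator_apply, pd_comm]
  simp

lemma anchor_gen (i j k l : Fin 2) :
    anchor ((if j = k then (2 : S) * xc k else 0) • sb i l
      - (if l = i then (2 : S) * xc i else 0) • sb k j)
    = ⁅anchor (sb i j), anchor (sb k l)⁆ := by
  rw [anchor_sub, anchor_smul, anchor_smul, anchor_sb, anchor_sb, anchor_sb, anchor_sb,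
    lie_smul_smul, pd_sq, pd_sq, lie_pd_pd]
  split_ifs <;> module

end Aux2

lemma anchor_zero : anchor (0 : E₀) = 0 := by
  simp [anchor]

lemma anchor_neg (X : E₀) : anchor (-X) = - anchor X := by
  rw [show -X = 0 - X from (zero_sub X).symm, anchor_sub, anchor_zero]
  abel

lemma lie_add' (D E F : Derivation ℝ S S) : ⁅D, E + F⁆ = ⁅D, E⁆ + ⁅D, F⁆ := by
  ext a
  simp only [Derivation.commutator_apply, Derivation.add_apply, map_add]
  ring

lemma add_lie' (D E F : Derivation ℝ S S) : ⁅D + E, F⁆ = ⁅D, F⁆ + ⁅E, F⁆ := by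
  ext a
  simp only [Derivation.commutator_apply, Derivation.add_apply, map_add]
  ring

lemma key (L : E₀ → E₀ → E₀) (hL : IsBracket L) (f g : S) (i j k l : Fin 2) :
    anchor (L (f • sb i j) (g • sb k l)) = ⁅anchor (f • sb i j), anchor (g • sb k l)⁆ := by
  obtain ⟨h1, h2, h3, h4, hskew, hleib, hgen⟩ := hL
  have hAB : anchor (L (sb i j) (sb k l)) = ⁅anchor (sb i j), anchor (sb k l)⁆ := by
    rw [hgen]; exact anchor_gen i j k l
  have e1 : L (f • sb i j) (sb k l)
      = -(anchor (sb k l) f • sb i j) + f • L (sb i j) (sb k l) := by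
    rw [show L (f • sb i j) (sb k l) = - L (sb k l) (f • sb i j) from by
        rw [hskew (f • sb i j) (sb k l), neg_neg],
      hleib f (sb k l) (sb i j), hskew (sb i j) (sb k l)]
    module
  rw [hleib g (f • sb i j) (sb k l), e1]
  simp only [smul_add, smul_neg, anchor_add, anchor_neg, anchor_smul, smul_deriv_apply,
    hAB, anchor_sb, lie_smul_smul, lie_pd_pd]
  module

/-- the bracket `[·,·]_{E₀}` is anchor-compatible:
`ρ([X,Y]_{E₀}) = [ρ(X), ρ(Y)]` (Lie bracket of vector fields), i.e.
`(E₀, ρ, [·,·]_{E₀})` is an almost Lie algebroid. -/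
theorem statement2 (L : E₀ → E₀ → E₀) (hL : IsBracket L) :
    ∀ X Y : E₀, anchor (L X Y) = ⁅anchor X, anchor Y⁆ := by
  intro X Y
  have decomp : ∀ Z : E₀,
      Z = Z 0 0 • sb 0 0 + Z 0 1 • sb 0 1 + (Z 1 0 • sb 1 0 + Z 1 1 • sb 1 1) := by
    intro Z
    ext a b
    fin_cases a <;> fin_cases b <;>
      simp [sb, Matrix.single, Matrix.add_apply, Matrix.smul_apply]
  have hY : ∀ (f : S) (i j : Fin 2),
      anchor (L (f • sb i j) Y) = ⁅anchor (f • sb i j), anchor Y⁆ := by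
    intro f i j
    rw [decomp Y]
    simp only [hL.2.1, anchor_add, key L hL]
    rw [lie_add', lie_add', lie_add']
  rw [decomp X]
  simp only [hL.1, anchor_add, hY]
  rw [add_lie', add_lie', add_lie']
end
end

section
/- Let (E, ρ, [·,·]) be an almost Lie algebroid (i.e., ρ([X,Y]) = [ρ(X), ρ(Y)] for all X, Y) and ∇ a torsion-free E-connection on E with curvature R. Then the derived bracket [U,V]_{E^(1)} = ∇^(1)_U V − ∇^(1)_V U on E^(1) = E ⊕ Λ²_A E satisfies the anchor compatibility ρ^(1)([U,V]_{E^(1)}) = [ρ^(1)(U), ρ^(1)(V)] for all U, V ∈ E^(1) if and only if ρ(R(X,Y)Z) = 0 for all X, Y, Z ∈ E. -/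
noncomputable section

set_option maxHeartbeats 1000000
set_option synthInstance.maxHeartbeats 400000

/-- The wedge `X ∧ Y ∈ Λ²_A E` of two elements of `E`. -/
def wedgeA (A : Type*) [CommRing A] {E : Type*} [AddCommGroup E] [Module A E] (X Y : E) :
    ⋀[A]^2 E :=
  ⟨ExteriorAlgebra.ιMulti A 2 ![X, Y], ExteriorAlgebra.ιMulti_range A 2 (Set.mem_range_self _)⟩

section Aux

variable {A : Type*} [CommRing A] {E : Type*} [AddCommGroup E] [Module A E]

lemma wedgeA_skew (X Y : E) : wedgeA A Y X = - wedgeA A X Y := by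
  apply Subtype.ext
  show ExteriorAlgebra.ιMulti A 2 ![Y, X] = - ExteriorAlgebra.ιMulti A 2 ![X, Y]
  have h : ![Y, X] = ![X, Y] ∘ Equiv.swap (0 : Fin 2) 1 := by
    funext i; fin_cases i <;> simp
  rw [h, AlternatingMap.map_swap _ _ (by decide : (0 : Fin 2) ≠ 1)]

lemma wedgeA_smul (f : A) (X Y : E) : f • wedgeA A X Y = wedgeA A (f • X) Y := by
  apply Subtype.ext
  show f • ExteriorAlgebra.ιMulti A 2 ![X, Y] = ExteriorAlgebra.ιMulti A 2 ![f • X, Y]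
  have h1 : ![f • X, Y] = Function.update ![X, Y] 0 (f • X) := by
    funext i; fin_cases i <;> simp
  have h2 : ![X, Y] = Function.update ![X, Y] 0 X := by
    funext i; fin_cases i <;> simp
  rw [h1, AlternatingMap.map_update_smul, ← h2]

lemma wedgeA_gen (ω : ⋀[A]^2 E) :
    ω ∈ AddSubgroup.closure (Set.range fun p : E × E => wedgeA A p.1 p.2) := by
  set S : Set (⋀[A]^2 E) := Set.range fun p : E × E => wedgeA A p.1 p.2 with hS
  let N : Submodule A (⋀[A]^2 E) :=
  { carrier := AddSubgroup.closure S
    add_mem' := fun h h' => AddSubgroup.add_mem _ h h'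
    zero_mem' := AddSubgroup.zero_mem _
    smul_mem' := by
      intro f x hx
      induction hx using AddSubgroup.closure_induction with
      | mem w hw =>
          obtain ⟨p, rfl⟩ := hw
          rw [wedgeA_smul]
          exact AddSubgroup.subset_closure ⟨(f • p.1, p.2), rfl⟩
      | zero => rw [smul_zero]; exact AddSubgroup.zero_mem _
      | add a b _ _ ha hb => rw [smul_add]; exact AddSubgroup.add_mem _ ha hb
      | neg a _ ha => rw [smul_neg]; exact AddSubgroup.neg_mem _ ha }
  show ω ∈ N
  have hcoe : (ω : ExteriorAlgebra A E) ∈ Submodule.span A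
      (Set.range (ExteriorAlgebra.ιMulti A 2 (M := E))) := by
    rw [ExteriorAlgebra.ιMulti_span_fixedDegree]; exact ω.2
  have key : ∀ (x : ExteriorAlgebra A E)
      (hx : x ∈ Submodule.span A (Set.range (ExteriorAlgebra.ιMulti A 2 (M := E))))
      (h : x ∈ ⋀[A]^2 E), (⟨x, h⟩ : ⋀[A]^2 E) ∈ N := by
    intro x hx
    induction hx using Submodule.span_induction with
    | mem x hx =>
        intro h
        obtain ⟨v, rfl⟩ := hx
        have hv : (⟨ExteriorAlgebra.ιMulti A 2 v, h⟩ : ⋀[A]^2 E) = wedgeA A (v 0) (v 1) := by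
          apply Subtype.ext
          show ExteriorAlgebra.ιMulti A 2 v = ExteriorAlgebra.ιMulti A 2 ![v 0, v 1]
          congr 1
          funext i; fin_cases i <;> simp
        rw [hv]
        exact AddSubgroup.subset_closure ⟨(v 0, v 1), rfl⟩
    | zero =>
        intro h
        have : (⟨(0 : ExteriorAlgebra A E), h⟩ : ⋀[A]^2 E) = 0 := rfl
        rw [this]; exact N.zero_mem
    | add x y hx hy ihx ihy =>
        intro h
        have hx2 : x ∈ ⋀[A]^2 E := by
          rw [← ExteriorAlgebra.ιMulti_span_fixedDegree]; exact hx
        have hy2 : y ∈ ⋀[A]^2 E := by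
          rw [← ExteriorAlgebra.ιMulti_span_fixedDegree]; exact hy
        have : (⟨x + y, h⟩ : ⋀[A]^2 E) = ⟨x, hx2⟩ + ⟨y, hy2⟩ := rfl
        rw [this]; exact N.add_mem (ihx hx2) (ihy hy2)
    | smul a x hx ihx =>
        intro h
        have hx2 : x ∈ ⋀[A]^2 E := by
          rw [← ExteriorAlgebra.ιMulti_span_fixedDegree]; exact hx
        have : (⟨a • x, h⟩ : ⋀[A]^2 E) = a • ⟨x, hx2⟩ := rfl
        rw [this]; exact N.smul_mem a (ihx hx2)
  have := key (ω : ExteriorAlgebra A E) hcoe ω.2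
  simpa using this

end Aux

/-- Let `(E, ρ, br)` be an almost Lie algebroid over a commutative
ℝ-algebra `A` and `D` a torsion-free `E`-connection on `E` with curvature `R`.  The derived
bracket `[U,V] = ∇¹_U V − ∇¹_V U` on `E⁽¹⁾ = E ⊕ Λ²_A E` (with anchor `ρ¹` and lifted
connection `∇¹` determined by the formulas below) satisfies anchor compatibility for all
`U, V ∈ E⁽¹⁾` if and only if `ρ(R(X,Y)Z) = 0` for all `X, Y, Z ∈ E`. -/
theorem statement10
    {A : Type*} [CommRing A] [Algebra ℝ A]
    {E : Type*} [AddCommGroup E] [Module A E] [Module ℝ E] [IsScalarTower ℝ A E]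
    (ρ : E →ₗ[A] Derivation ℝ A A) (br : E → E → E)
    (br_addl : ∀ X X' Y : E, br (X + X') Y = br X Y + br X' Y)
    (br_addr : ∀ X Y Y' : E, br X (Y + Y') = br X Y + br X Y')
    (br_smull : ∀ (c : ℝ) (X Y : E), br (c • X) Y = c • br X Y)
    (br_smulr : ∀ (c : ℝ) (X Y : E), br X (c • Y) = c • br X Y)
    (br_skew : ∀ X Y : E, br Y X = - br X Y)
    (br_leib : ∀ (f : A) (X Y : E), br X (f • Y) = ρ X f • Y + f • br X Y)
    (br_anchor : ∀ X Y : E, ρ (br X Y) = ⁅ρ X, ρ Y⁆)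
    (D : E → E → E)
    (D_addl : ∀ X X' Y : E, D (X + X') Y = D X Y + D X' Y)
    (D_smull : ∀ (f : A) (X Y : E), D (f • X) Y = f • D X Y)
    (D_addr : ∀ X Y Y' : E, D X (Y + Y') = D X Y + D X Y')
    (D_leib : ∀ (f : A) (X Y : E), D X (f • Y) = ρ X f • Y + f • D X Y)
    (D_torsionfree : ∀ X Y : E, D X Y - D Y X = br X Y)
    (R : E → E → E → E)
    (hR : ∀ X Y Z : E, R X Y Z = D X (D Y Z) - D Y (D X Z) - D (br X Y) Z)
    (ρd : E × ⋀[A]^2 E → Derivation ℝ A A)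
    (hρdadd : ∀ U V : E × ⋀[A]^2 E, ρd (U + V) = ρd U + ρd V)
    (hρdE : ∀ X : E, ρd (X, 0) = ρ X)
    (hρdW : ∀ X Y : E, ρd (0, wedgeA A X Y) = ⁅ρ X, ρ Y⁆ - ρ (br X Y))
    (Dd : E × ⋀[A]^2 E → E × ⋀[A]^2 E → E × ⋀[A]^2 E)
    (hDdaddl : ∀ U U' V : E × ⋀[A]^2 E, Dd (U + U') V = Dd U V + Dd U' V)
    (hDdaddr : ∀ U V V' : E × ⋀[A]^2 E, Dd U (V + V') = Dd U V + Dd U V')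
    (hDdsmull : ∀ (f : A) (U V : E × ⋀[A]^2 E), Dd (f • U) V = f • Dd U V)
    (hDdleib : ∀ (f : A) (U V : E × ⋀[A]^2 E), Dd U (f • V) = ρd U f • V + f • Dd U V)
    (hDd1 : ∀ X Y : E, Dd (X, 0) (Y, 0) = (D X Y, algebraMap ℝ A (1 / 2) • wedgeA A X Y))
    (hDd2 : ∀ X Y Z : E, Dd (0, wedgeA A X Y) (Z, 0) = (R X Y Z, 0))
    (hDd3 : ∀ X Y Z : E, Dd (X, 0) (0, wedgeA A Y Z) =
      (0, wedgeA A (D X Y) Z + wedgeA A Y (D X Z)))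
    (hDd4 : ∀ X Y Z T : E, Dd (0, wedgeA A X Y) (0, wedgeA A Z T) =
      (0, wedgeA A (R X Y Z) T + wedgeA A Z (R X Y T))) :
    (∀ U V : E × ⋀[A]^2 E, ρd (Dd U V - Dd V U) = ⁅ρd U, ρd V⁆) ↔
      (∀ X Y Z : E, ρ (R X Y Z) = 0) := by
  -- shared helper facts about ρd
  have ρd0 : ρd 0 = 0 := by
    have h := hρdadd 0 0
    rw [add_zero] at h
    exact right_eq_add.mp h
  have ρdneg : ∀ u, ρd (-u) = - ρd u := by
    intro u
    have h : ρd u + ρd (-u) = 0 := by rw [← hρdadd]; simp [ρd0]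
    exact eq_neg_of_add_eq_zero_right h
  have ρdsub : ∀ u v, ρd (u - v) = ρd u - ρd v := by
    intro u v
    rw [sub_eq_add_neg, hρdadd, ρdneg, sub_eq_add_neg]
  have ρdsplit : ∀ (x : E) (w : ⋀[A]^2 E), ρd (x, w) = ρd (x, 0) + ρd (0, w) := by
    intro x w
    rw [← hρdadd, Prod.mk_add_mk, add_zero, zero_add]
  have hsplitw : ∀ a b : ⋀[A]^2 E, ρd ((0 : E), a + b) = ρd (0, a) + ρd (0, b) := by
    intro a b
    rw [← hρdadd, Prod.mk_add_mk, add_zero]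
  have hsubw : ∀ a b : ⋀[A]^2 E, ρd ((0 : E), a - b) = ρd (0, a) - ρd (0, b) := by
    intro a b
    have e : ((0 : E), a - b) = ((0 : E), a) - ((0 : E), b) := by
      rw [Prod.mk_sub_mk, sub_zero]
    rw [e, ρdsub]
  have hW0 : ∀ X Y : E, ρd ((0 : E), wedgeA A X Y) = 0 := by
    intro X Y
    rw [hρdW, br_anchor, sub_self]
  constructor
  · -- forward direction
    intro h X Y Z
    have h1 := h (0, wedgeA A X Y) (Z, 0)
    rw [hDd2, hDd3, ρdsub, hsplitw] at h1
    simp only [hρdE, hW0] at h1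
    simpa using h1
  · -- backward direction
    intro hRρ
    -- helper facts about Dd
    have Dd0r : ∀ U, Dd U 0 = 0 := by
      intro U
      have h := hDdaddr U 0 0
      rw [add_zero] at h
      exact right_eq_add.mp h
    have Dd0l : ∀ V, Dd 0 V = 0 := by
      intro V
      have h := hDdaddl 0 0 V
      rw [add_zero] at h
      exact right_eq_add.mp h
    have Ddnegr : ∀ U V, Dd U (-V) = - Dd U V := by
      intro U V
      have h : Dd U V + Dd U (-V) = 0 := by rw [← hDdaddr]; simp [Dd0r]
      exact eq_neg_of_add_eq_zero_right h
    have Ddnegl : ∀ U V, Dd (-U) V = - Dd U V := by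
      intro U V
      have h : Dd U V + Dd (-U) V = 0 := by rw [← hDdaddl]; simp [Dd0l]
      exact eq_neg_of_add_eq_zero_right h
    -- structural lemmas for the property P U V := ρd (Dd U V - Dd V U) = ⁅ρd U, ρd V⁆
    have Φswap : ∀ U V : E × ⋀[A]^2 E,
        ρd (Dd U V - Dd V U) = ⁅ρd U, ρd V⁆ →
        ρd (Dd V U - Dd U V) = ⁅ρd V, ρd U⁆ := by
      intro U V h
      have e : Dd V U - Dd U V = -(Dd U V - Dd V U) := by abel
      rw [e, ρdneg, h]
      exact lie_skew _ _
    have Φaddr : ∀ U V V' : E × ⋀[A]^2 E,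
        ρd (Dd U V - Dd V U) = ⁅ρd U, ρd V⁆ →
        ρd (Dd U V' - Dd V' U) = ⁅ρd U, ρd V'⁆ →
        ρd (Dd U (V + V') - Dd (V + V') U) = ⁅ρd U, ρd (V + V')⁆ := by
      intro U V V' h h'
      have e : Dd U (V + V') - Dd (V + V') U
          = (Dd U V - Dd V U) + (Dd U V' - Dd V' U) := by
        rw [hDdaddr, hDdaddl]; abel
      calc ρd (Dd U (V + V') - Dd (V + V') U)
          = ρd ((Dd U V - Dd V U) + (Dd U V' - Dd V' U)) := by rw [e]
        _ = ρd (Dd U V - Dd V U) + ρd (Dd U V' - Dd V' U) := hρdadd _ _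
        _ = ⁅ρd U, ρd V⁆ + ⁅ρd U, ρd V'⁆ := by rw [h, h']
        _ = ⁅ρd U, ρd V + ρd V'⁆ := (lie_add _ _ _).symm
        _ = ⁅ρd U, ρd (V + V')⁆ := by rw [← hρdadd]
    have Φ0r : ∀ U : E × ⋀[A]^2 E, ρd (Dd U 0 - Dd 0 U) = ⁅ρd U, ρd 0⁆ := by
      intro U
      simp [Dd0r, Dd0l, ρd0]
    have Φnegr : ∀ U V : E × ⋀[A]^2 E,
        ρd (Dd U V - Dd V U) = ⁅ρd U, ρd V⁆ →
        ρd (Dd U (-V) - Dd (-V) U) = ⁅ρd U, ρd (-V)⁆ := by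
      intro U V h
      have e : Dd U (-V) - Dd (-V) U = -(Dd U V - Dd V U) := by
        rw [Ddnegr, Ddnegl]; abel
      rw [e, ρdneg, h, ρdneg, lie_neg]
    have Φaddl : ∀ U U' V : E × ⋀[A]^2 E,
        ρd (Dd U V - Dd V U) = ⁅ρd U, ρd V⁆ →
        ρd (Dd U' V - Dd V U') = ⁅ρd U', ρd V⁆ →
        ρd (Dd (U + U') V - Dd V (U + U')) = ⁅ρd (U + U'), ρd V⁆ := by
      intro U U' V h h'
      exact Φswap _ _ (Φaddr V U U' (Φswap _ _ h) (Φswap _ _ h'))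
    have Φ0l : ∀ V : E × ⋀[A]^2 E, ρd (Dd 0 V - Dd V 0) = ⁅ρd 0, ρd V⁆ := by
      intro V
      simp [Dd0r, Dd0l, ρd0]
    have Φnegl : ∀ U V : E × ⋀[A]^2 E,
        ρd (Dd U V - Dd V U) = ⁅ρd U, ρd V⁆ →
        ρd (Dd (-U) V - Dd V (-U)) = ⁅ρd (-U), ρd V⁆ := by
      intro U V h
      exact Φswap _ _ (Φnegr V U (Φswap _ _ h))
    -- base cases
    have base11 : ∀ X Y : E,
        ρd (Dd (X, 0) (Y, 0) - Dd (Y, 0) (X, 0)) = ⁅ρd (X, 0), ρd (Y, 0)⁆ := by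
      intro X Y
      rw [hDd1, hDd1]
      have e2 : algebraMap ℝ A (1 / 2) • wedgeA A X Y
          - algebraMap ℝ A (1 / 2) • wedgeA A Y X = wedgeA A X Y := by
        rw [wedgeA_skew X Y, smul_neg, sub_neg_eq_add, ← add_smul, ← map_add]
        norm_num
      have e1 : ((D X Y, algebraMap ℝ A (1 / 2) • wedgeA A X Y) :
            E × ⋀[A]^2 E) - (D Y X, algebraMap ℝ A (1 / 2) • wedgeA A Y X)
          = (br X Y, wedgeA A X Y) := by
        rw [Prod.mk_sub_mk, e2, D_torsionfree]
      rw [e1, ρdsplit, hρdE, hρdW, hρdE, hρdE]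
      abel
    have base21 : ∀ X Y Z : E,
        ρd (Dd ((0 : E), wedgeA A X Y) (Z, 0) - Dd (Z, 0) ((0 : E), wedgeA A X Y))
          = ⁅ρd ((0 : E), wedgeA A X Y), ρd (Z, 0)⁆ := by
      intro X Y Z
      rw [hDd2, hDd3, ρdsub, hsplitw]
      simp only [hρdE, hW0, hRρ]
      simp
    have base12 : ∀ X Y Z : E,
        ρd (Dd (X, 0) ((0 : E), wedgeA A Y Z) - Dd ((0 : E), wedgeA A Y Z) (X, 0))
          = ⁅ρd (X, 0), ρd ((0 : E), wedgeA A Y Z)⁆ :=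
      fun X Y Z => Φswap _ _ (base21 Y Z X)
    have base22 : ∀ X Y Z T : E,
        ρd (Dd ((0 : E), wedgeA A X Y) ((0 : E), wedgeA A Z T)
            - Dd ((0 : E), wedgeA A Z T) ((0 : E), wedgeA A X Y))
          = ⁅ρd ((0 : E), wedgeA A X Y), ρd ((0 : E), wedgeA A Z T)⁆ := by
      intro X Y Z T
      rw [hDd4, hDd4, Prod.mk_sub_mk, sub_zero]
      simp only [hsubw, hsplitw, hW0, zero_lie, lie_zero, add_zero, sub_zero, sub_self]
    -- keys : the property holds when the first argument is basic
    have key1 : ∀ (X : E) (V : E × ⋀[A]^2 E),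
        ρd (Dd (X, 0) V - Dd V (X, 0)) = ⁅ρd (X, 0), ρd V⁆ := by
      intro X V
      obtain ⟨v1, v2⟩ := V
      have hv2 : ρd (Dd (X, 0) ((0 : E), v2) - Dd ((0 : E), v2) (X, 0))
          = ⁅ρd (X, 0), ρd ((0 : E), v2)⁆ := by
        induction wedgeA_gen v2 using AddSubgroup.closure_induction with
        | mem w hw => obtain ⟨p, rfl⟩ := hw; exact base12 X p.1 p.2
        | zero =>
            have e : ((0 : E), (0 : ⋀[A]^2 E)) = (0 : E × ⋀[A]^2 E) := rfl
            rw [e]; exact Φ0r _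
        | add a b _ _ iha ihb =>
            have e : ((0 : E), a + b) = ((0 : E), a) + ((0 : E), b) := by
              rw [Prod.mk_add_mk, add_zero]
            rw [e]; exact Φaddr _ _ _ iha ihb
        | neg a _ iha =>
            have e : ((0 : E), -a) = -((0 : E), a) := by rw [Prod.neg_mk, neg_zero]
            rw [e]; exact Φnegr _ _ iha
      have hv1 := base11 X v1
      have := Φaddr _ _ _ hv1 hv2
      have eV : (v1, (0 : ⋀[A]^2 E)) + ((0 : E), v2) = (v1, v2) := by
        rw [Prod.mk_add_mk, add_zero, zero_add]
      rwa [eV] at this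
    have key2 : ∀ (X Y : E) (V : E × ⋀[A]^2 E),
        ρd (Dd ((0 : E), wedgeA A X Y) V - Dd V ((0 : E), wedgeA A X Y))
          = ⁅ρd ((0 : E), wedgeA A X Y), ρd V⁆ := by
      intro X Y V
      obtain ⟨v1, v2⟩ := V
      have hv2 : ρd (Dd ((0 : E), wedgeA A X Y) ((0 : E), v2)
            - Dd ((0 : E), v2) ((0 : E), wedgeA A X Y))
          = ⁅ρd ((0 : E), wedgeA A X Y), ρd ((0 : E), v2)⁆ := by
        induction wedgeA_gen v2 using AddSubgroup.closure_induction with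
        | mem w hw => obtain ⟨p, rfl⟩ := hw; exact base22 X Y p.1 p.2
        | zero =>
            have e : ((0 : E), (0 : ⋀[A]^2 E)) = (0 : E × ⋀[A]^2 E) := rfl
            rw [e]; exact Φ0r _
        | add a b _ _ iha ihb =>
            have e : ((0 : E), a + b) = ((0 : E), a) + ((0 : E), b) := by
              rw [Prod.mk_add_mk, add_zero]
            rw [e]; exact Φaddr _ _ _ iha ihb
        | neg a _ iha =>
            have e : ((0 : E), -a) = -((0 : E), a) := by rw [Prod.neg_mk, neg_zero]
            rw [e]; exact Φnegr _ _ iha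
      have hv1 := base21 X Y v1
      have := Φaddr _ _ _ hv1 hv2
      have eV : (v1, (0 : ⋀[A]^2 E)) + ((0 : E), v2) = (v1, v2) := by
        rw [Prod.mk_add_mk, add_zero, zero_add]
      rwa [eV] at this
    -- conclusion
    intro U V
    obtain ⟨u1, u2⟩ := U
    have hu2 : ρd (Dd ((0 : E), u2) V - Dd V ((0 : E), u2))
        = ⁅ρd ((0 : E), u2), ρd V⁆ := by
      induction wedgeA_gen u2 using AddSubgroup.closure_induction with
      | mem w hw => obtain ⟨p, rfl⟩ := hw; exact key2 p.1 p.2 V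
      | zero =>
          have e : ((0 : E), (0 : ⋀[A]^2 E)) = (0 : E × ⋀[A]^2 E) := rfl
          rw [e]; exact Φ0l _
      | add a b _ _ iha ihb =>
          have e : ((0 : E), a + b) = ((0 : E), a) + ((0 : E), b) := by
            rw [Prod.mk_add_mk, add_zero]
          rw [e]; exact Φaddl _ _ _ iha ihb
      | neg a _ iha =>
          have e : ((0 : E), -a) = -((0 : E), a) := by rw [Prod.neg_mk, neg_zero]
          rw [e]; exact Φnegl _ _ iha
    have hu1 := key1 u1 V
    have := Φaddl _ _ _ hu1 hu2
    have eU : (u1, (0 : ⋀[A]^2 E)) + ((0 : E), u2) = (u1, u2) := by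
      rw [Prod.mk_add_mk, add_zero, zero_add]
    rwa [eU] at this
end
end

section
/- Let (E, ρ, [·,·]) be an almost Lie algebroid over A (so ρ([X,Y]) = [ρ(X), ρ(Y)]), with Jacobiator J, and let d denote the algebroid differential on alternating A-multilinear forms. Then: (a) for every f ∈ A (a 0-form), d²f = 0; (b) for every A-linear 1-form ω : E → A and all X, Y, Z ∈ E, (d²ω)(X,Y,Z) = −ω(J(X,Y,Z)). In particular d² vanishes on 1-forms if and only if all 1-forms annihilate the Jacobiator. -/
noncomputable section

set_option maxHeartbeats 1000000
set_option synthInstance.maxHeartbeats 400000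

/-- The differential of a `0`-form `f ∈ A`: `df(X) = ρ(X)(f)`. -/
def d0 {A : Type*} [CommRing A] [Algebra ℝ A] {E : Type*} [AddCommGroup E] [Module A E]
    (ρ : E →ₗ[A] Derivation ℝ A A) (f : A) : E → A :=
  fun X => ρ X f

/-- The differential of a `1`-form. -/
def d1 {A : Type*} [CommRing A] [Algebra ℝ A] {E : Type*} [AddCommGroup E] [Module A E]
    (ρ : E →ₗ[A] Derivation ℝ A A) (br : E → E → E) (ω : E → A) : E → E → A :=
  fun X Y => ρ X (ω Y) - ρ Y (ω X) - ω (br X Y)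

/-- The differential of a `2`-form. -/
def d2 {A : Type*} [CommRing A] [Algebra ℝ A] {E : Type*} [AddCommGroup E] [Module A E]
    (ρ : E →ₗ[A] Derivation ℝ A A) (br : E → E → E) (η : E → E → A) : E → E → E → A :=
  fun X Y Z => ρ X (η Y Z) - ρ Y (η X Z) + ρ Z (η X Y)
    - η (br X Y) Z + η (br X Z) Y - η (br Y Z) X

/-- For an almost Lie algebroid `(E, ρ, br)` over a commutative ℝ-algebra
`A`, with Jacobiator `J`: (a) `d²f = 0` for every `0`-form `f ∈ A`; (b) for every `A`-linear
`1`-form `ω` one has `(d²ω)(X,Y,Z) = −ω(J(X,Y,Z))`; in particular `d²` vanishes on `1`-forms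
iff all `1`-forms annihilate the Jacobiator. -/
theorem statement17
    {A : Type*} [CommRing A] [Algebra ℝ A]
    {E : Type*} [AddCommGroup E] [Module A E] [Module ℝ E] [IsScalarTower ℝ A E]
    (ρ : E →ₗ[A] Derivation ℝ A A) (br : E → E → E)
    (br_addl : ∀ X X' Y : E, br (X + X') Y = br X Y + br X' Y)
    (br_addr : ∀ X Y Y' : E, br X (Y + Y') = br X Y + br X Y')
    (br_smull : ∀ (c : ℝ) (X Y : E), br (c • X) Y = c • br X Y)
    (br_smulr : ∀ (c : ℝ) (X Y : E), br X (c • Y) = c • br X Y)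
    (br_skew : ∀ X Y : E, br Y X = - br X Y)
    (br_leib : ∀ (f : A) (X Y : E), br X (f • Y) = ρ X f • Y + f • br X Y)
    (br_anchor : ∀ X Y : E, ρ (br X Y) = ⁅ρ X, ρ Y⁆) :
    (∀ (f : A) (X Y : E), d1 ρ br (d0 ρ f) X Y = 0) ∧
    (∀ (ω : E →ₗ[A] A) (X Y Z : E),
      d2 ρ br (d1 ρ br ω) X Y Z = - ω (br X (br Y Z) + br Y (br Z X) + br Z (br X Y))) ∧
    ((∀ (ω : E →ₗ[A] A) (X Y Z : E), d2 ρ br (d1 ρ br ω) X Y Z = 0) ↔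
      (∀ (ω : E →ₗ[A] A) (X Y Z : E),
        ω (br X (br Y Z) + br Y (br Z X) + br Z (br X Y)) = 0)) := by
  have hb : ∀ (X Y : E) (f : A), ρ (br X Y) f = ρ X (ρ Y f) - ρ Y (ρ X f) := by
    intro X Y f
    rw [br_anchor]
    rfl
  have hB : ∀ (ω : E →ₗ[A] A) (X Y Z : E),
      d2 ρ br (d1 ρ br ω) X Y Z
        = - ω (br X (br Y Z) + br Y (br Z X) + br Z (br X Y)) := by
    intro ω X Y Z
    simp only [d2, d1, map_sub, map_add, hb,
      show br (br X Y) Z = - br Z (br X Y) from br_skew Z (br X Y),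
      show br (br X Z) Y = - br Y (br X Z) from br_skew Y (br X Z),
      show br (br Y Z) X = - br X (br Y Z) from br_skew X (br Y Z),
      show br Y (br Z X) = - br Y (br X Z) from by
        rw [br_skew X Z, ← neg_one_smul ℝ (br X Z), br_smulr, neg_one_smul],
      map_neg]
    abel
  refine ⟨?_, hB, ?_⟩
  · intro f X Y
    simp [d1, d0, hb]
  · constructor <;> intro h ω X Y Z
    · have := h ω X Y Z
      rw [hB, neg_eq_zero] at this
      exact this
    · rw [hB]
      simp [h ω X Y Z]
end
end
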